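/- Let n ≥ 3 be an integer, r > 0, and let k be an integer with 1 ≤ k ≤ K where K = ⌊(n−2)/2⌋; set γ = kπ/n and γ' = (k+1)π/n. Let s be a real number with 2r·sin γ·sin γ' ≤ s, and define α_k(s) = arcsin((2r/s)·sin γ·sin γ') − γ and q_k(s,ψ) = r·cos(π/n)·sec γ·cos ψ − (s/2)·(tan γ·cos²ψ − cot γ·sin²ψ). Then r·cos(γ' − α_k(s)) = q_k(s, α_k(s)); equivalently, the vertex W = (r cos((2k+1)π/n), r sin((2k+1)π/n)) lies on the line {(x,y) ∈ ℝ² : x cos(γ + α_k(s)) + y sin(γ + α_k(s)) = q_k(s, α_k(s))}. -/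

import Mathlib

open Real

lemma alg (γ γ' A s r : ℝ) (hc : Real.cos γ ≠ 0) (hsg : Real.sin γ ≠ 0)
    (key : s * Real.sin A = 2 * r * Real.sin γ * Real.sin γ') :
    r * Real.cos (γ' - (A - γ)) =
      r * Real.cos (γ' - γ) * (Real.cos γ)⁻¹ * Real.cos (A - γ) -
        s / 2 * (Real.sin γ * (Real.cos γ)⁻¹ * Real.cos (A - γ) ^ 2 -
          Real.cos γ * (Real.sin γ)⁻¹ * Real.sin (A - γ) ^ 2) := by
  rw [show γ' - (A - γ) = (γ' + γ) - A by ring]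
  rw [Real.cos_sub (γ' + γ) A, Real.cos_add, Real.sin_add, Real.cos_sub γ' γ,
    Real.cos_sub A γ, Real.sin_sub A γ]
  field_simp
  linear_combination (-(Real.sin A * (Real.cos γ ^ 2 - Real.sin γ ^ 2) -
      2 * Real.cos γ * Real.sin γ * Real.cos A)) * key +
    (s * (2 * Real.cos γ * Real.sin γ * Real.cos A * Real.sin A +
      Real.sin A ^ 2 * (Real.sin γ ^ 2 - Real.cos γ ^ 2))) * Real.sin_sq_add_cos_sq γ


/-- At the angle `α_k(s) = arcsin((2r/s) sin γ sin γ') − γ` (with `γ = kπ/n`,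
`γ' = (k+1)π/n`), the chord of length `s` between the two side lines has an endpoint
at the vertex `W = (r cos((2k+1)π/n), r sin((2k+1)π/n))`:
`r cos(γ' − α_k(s)) = q_k(s, α_k(s))`, equivalently `W` lies on the line with normal
angle `γ + α_k(s)` at distance `q_k(s, α_k(s))` from the origin. -/
theorem vertex_on_chord_line (n : ℕ) (hn : 3 ≤ n) (r : ℝ) (hr : 0 < r)
    (k : ℕ) (hk₁ : 1 ≤ k) (hk₂ : k ≤ (n - 2) / 2) (s : ℝ)
    (hs : 2 * r * Real.sin (k * π / n) * Real.sin ((k + 1) * π / n) ≤ s) :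
    r * Real.cos ((k + 1) * π / n -
        (Real.arcsin (2 * r / s * Real.sin (k * π / n) * Real.sin ((k + 1) * π / n)) -
          k * π / n)) =
      r * Real.cos (π / n) * (Real.cos (k * π / n))⁻¹ *
          Real.cos (Real.arcsin (2 * r / s * Real.sin (k * π / n) *
            Real.sin ((k + 1) * π / n)) - k * π / n) -
        s / 2 * (Real.sin (k * π / n) * (Real.cos (k * π / n))⁻¹ *
            Real.cos (Real.arcsin (2 * r / s * Real.sin (k * π / n) *
              Real.sin ((k + 1) * π / n)) - k * π / n) ^ 2 -
          Real.cos (k * π / n) * (Real.sin (k * π / n))⁻¹ *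
            Real.sin (Real.arcsin (2 * r / s * Real.sin (k * π / n) *
              Real.sin ((k + 1) * π / n)) - k * π / n) ^ 2) ∧
    r * Real.cos ((2 * k + 1) * π / n) *
          Real.cos (k * π / n +
            (Real.arcsin (2 * r / s * Real.sin (k * π / n) *
              Real.sin ((k + 1) * π / n)) - k * π / n)) +
        r * Real.sin ((2 * k + 1) * π / n) *
          Real.sin (k * π / n +
            (Real.arcsin (2 * r / s * Real.sin (k * π / n) *
              Real.sin ((k + 1) * π / n)) - k * π / n)) =
      r * Real.cos (π / n) * (Real.cos (k * π / n))⁻¹ *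
          Real.cos (Real.arcsin (2 * r / s * Real.sin (k * π / n) *
            Real.sin ((k + 1) * π / n)) - k * π / n) -
        s / 2 * (Real.sin (k * π / n) * (Real.cos (k * π / n))⁻¹ *
            Real.cos (Real.arcsin (2 * r / s * Real.sin (k * π / n) *
              Real.sin ((k + 1) * π / n)) - k * π / n) ^ 2 -
          Real.cos (k * π / n) * (Real.sin (k * π / n))⁻¹ *
            Real.sin (Real.arcsin (2 * r / s * Real.sin (k * π / n) *
              Real.sin ((k + 1) * π / n)) - k * π / n) ^ 2) := by
  have h2k : 2 * k + 2 ≤ n := by omega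
  have hn0 : (0 : ℝ) < n := by positivity
  have hk0 : (1 : ℝ) ≤ k := by exact_mod_cast hk₁
  have h2kR : 2 * (k : ℝ) + 2 ≤ n := by exact_mod_cast h2k
  set γ : ℝ := k * π / n with hγ
  set γ' : ℝ := (k + 1) * π / n with hγ'
  have hγpos : 0 < γ := by
    apply div_pos (by positivity) hn0
  have hγ'le : γ' ≤ π / 2 := by
    rw [hγ', div_le_div_iff₀ hn0 two_pos]
    nlinarith [Real.pi_pos]
  have hγlt : γ < γ' := by
    rw [hγ, hγ', div_lt_div_iff₀ hn0 hn0]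
    nlinarith [Real.pi_pos]
  have hcos : 0 < Real.cos γ := by
    apply Real.cos_pos_of_mem_Ioo
    constructor <;> [linarith [Real.pi_pos]; linarith]
  have hsin : 0 < Real.sin γ := by
    apply Real.sin_pos_of_pos_of_lt_pi hγpos
    linarith [Real.pi_pos]
  have hsin' : 0 < Real.sin γ' := by
    apply Real.sin_pos_of_pos_of_lt_pi (by linarith)
    linarith [Real.pi_pos]
  have hspos : 0 < s := lt_of_lt_of_le (by positivity) hs
  set u : ℝ := 2 * r / s * Real.sin γ * Real.sin γ' with hu
  have hu0 : 0 ≤ u := by positivity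
  have hu1 : u ≤ 1 := by
    rw [hu, show 2 * r / s * Real.sin γ * Real.sin γ' =
      (2 * r * Real.sin γ * Real.sin γ') / s by ring]
    exact (div_le_one hspos).2 hs
  set A : ℝ := Real.arcsin u with hA
  have key : s * Real.sin A = 2 * r * Real.sin γ * Real.sin γ' := by
    rw [hA, Real.sin_arcsin (by linarith) hu1, hu]
    field_simp
  have h1 := alg γ γ' A s r (ne_of_gt hcos) (ne_of_gt hsin) key
  rw [show γ' - γ = π / n by rw [hγ, hγ']; ring] at h1
  refine ⟨h1, ?_⟩
  calc r * Real.cos ((2 * k + 1) * π / n) * Real.cos (γ + (A - γ)) +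
        r * Real.sin ((2 * k + 1) * π / n) * Real.sin (γ + (A - γ))
      = r * Real.cos ((2 * k + 1) * π / n - (γ + (A - γ))) := by
        rw [Real.cos_sub]; ring
    _ = r * Real.cos (γ' - (A - γ)) := by
        rw [show (2 * (k:ℝ) + 1) * π / n - (γ + (A - γ)) = γ' - (A - γ) by
          rw [hγ, hγ']; ring]
    _ = _ := h1
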